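/- arXiv:math/0011146 — 3 statements merged into one kernel-verified Lean document; each statement's English description precedes it below -/
import Mathlib

section
/- For every real y ≥ 0, F(2;y) = 1 − b_0(√y) e^{−y}, where b_0(t) = I_0(2t) = Σ_{m=0}^∞ t^{2m}/(m!)². -/
open scoped BigOperators

/-- `σ` has an increasing subsequence of length `l`. -/
def hasIncSubseq (k : ℕ) (σ : Equiv.Perm (Fin k)) (l : ℕ) : Prop :=
  ∃ s : Fin l → Fin k, StrictMono s ∧ StrictMono (⇑σ ∘ s)

/-- `f k r`: the number of permutations of `{1,…,k}` all of whose increasing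
subsequences have length at most `r`. -/
noncomputable def f (k r : ℕ) : ℕ :=
  Nat.card {σ : Equiv.Perm (Fin k) // ∀ l, hasIncSubseq k σ l → l ≤ r}

/-- `D r t = Σ_{k≥0} f_{k,r} t^{2k}/(k!)²`. -/
noncomputable def D (r : ℕ) (t : ℝ) : ℝ :=
  ∑' k : ℕ, (f k r : ℝ) * t ^ (2 * k) / ((Nat.factorial k : ℝ)) ^ 2

/-- `F(r;y) = e^{-y} Σ_{k≥r} R_{k,r} y^k/(k!)²` with `R_{k,r} = k! - f_{k,r-1}`. -/
noncomputable def Fdist (r : ℕ) (y : ℝ) : ℝ :=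
  Real.exp (-y) *
    ∑' k : ℕ, (((r + k).factorial : ℝ) - (f (r + k) (r - 1) : ℝ)) * y ^ (r + k)
      / (((r + k).factorial : ℝ)) ^ 2

/-- `b j t = I_j(2t) = Σ_{m≥0} t^{2m+j}/(m!(m+j)!)`. -/
noncomputable def b (j : ℕ) (t : ℝ) : ℝ :=
  ∑' m : ℕ, t ^ (2 * m + j) / ((Nat.factorial m : ℝ) * (Nat.factorial (m + j) : ℝ))

/-- `φ_r(y) = e^{-y} D_r(√y)`. -/
noncomputable def phi (r : ℕ) (y : ℝ) : ℝ := Real.exp (-y) * D r (Real.sqrt y)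

/-- First moment `M(y) = Σ_{r≥0} (1 - φ_r(y))`. -/
noncomputable def M (y : ℝ) : ℝ := ∑' r : ℕ, (1 - phi r y)

/-- Second moment `S(y) = Σ_{r≥0} (2r+1)(1 - φ_r(y))`. -/
noncomputable def S (y : ℝ) : ℝ := ∑' r : ℕ, (2 * (r : ℝ) + 1) * (1 - phi r y)

/-- Variance `V(y) = S(y) - M(y)²`. -/
noncomputable def V (y : ℝ) : ℝ := S y - (M y) ^ 2

lemma key_iff (n : ℕ) (σ : Equiv.Perm (Fin n)) :
    (∀ l, hasIncSubseq n σ l → l ≤ 1) ↔ σ = Fin.revPerm := by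
  constructor
  · intro h
    have hanti : StrictAnti ⇑σ := by
      intro i j hij
      rcases lt_trichotomy (σ i) (σ j) with hlt | heq | hgt
      · exfalso
        have h2 : hasIncSubseq n σ 2 := by
          refine ⟨![i, j], ?_, ?_⟩ <;>
          · intro a b hab
            fin_cases a <;> fin_cases b <;> simp_all
        exact absurd (h 2 h2) (by norm_num)
      · exact absurd (σ.injective heq) (ne_of_lt hij)
      · exact hgt
    have hg : StrictMono (fun x => (σ x).rev) := fun a b hab => by
      simpa using Fin.rev_lt_rev.2 (hanti hab)
    have hsurj : Function.Surjective (fun x => (σ x).rev) :=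
      (Fin.rev_involutive.surjective).comp σ.surjective
    have he : StrictMono.orderIsoOfSurjective _ hg hsurj = OrderIso.refl (Fin n) :=
      Subsingleton.elim _ _
    have hc : ⇑(StrictMono.orderIsoOfSurjective _ hg hsurj) = fun x => (σ x).rev :=
      StrictMono.coe_orderIsoOfSurjective _ _ _
    rw [he] at hc
    refine Equiv.ext fun x => ?_
    have hx : (σ x).rev = x := (congrFun hc x).symm
    have h2 : σ x = x.rev := by conv_rhs => rw [← hx, Fin.rev_rev]
    rw [Fin.revPerm_apply]; exact h2
  · rintro rfl l hl
    by_contra hl1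
    push_neg at hl1
    obtain ⟨s, hs, hss⟩ := hl
    have h01 : (⟨0, by omega⟩ : Fin l) < ⟨1, by omega⟩ := by simp [Fin.lt_def]
    have h1 := hs h01
    have h2 := hss h01
    simp only [Function.comp_apply, Fin.revPerm_apply] at h2
    exact absurd (Fin.rev_lt_rev.1 h2) (not_lt.2 h1.le)

lemma f_one (n : ℕ) : f n 1 = 1 := by
  unfold f
  rw [Nat.card_congr (Equiv.subtypeEquivRight (key_iff n))]
  simp [Nat.card_eq_fintype_card]

theorem aux_stmt4 (y : ℝ) (hy : 0 ≤ y) :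
    Real.exp (-y) *
    (∑' k : ℕ, (((2 + k).factorial : ℝ) - (f (2 + k) (2 - 1) : ℝ)) * y ^ (2 + k)
      / (((2 + k).factorial : ℝ)) ^ 2)
    = 1 - (∑' m : ℕ, (Real.sqrt y) ^ (2 * m + 0)
        / ((Nat.factorial m : ℝ) * (Nat.factorial (m + 0) : ℝ))) * Real.exp (-y) := by
  set E : ℕ → ℝ := fun n => y ^ n / n.factorial with hEdef
  set G : ℕ → ℝ := fun n => y ^ n / ((n.factorial : ℝ) * n.factorial) with hGdef
  have hE : Summable E := Real.summable_pow_div_factorial y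
  have hG : Summable G := by
    refine hE.of_nonneg_of_le (fun n => by positivity) (fun n => ?_)
    show y ^ n / ((n.factorial : ℝ) * n.factorial) ≤ y ^ n / n.factorial
    have h0 : (0:ℝ) < n.factorial := by positivity
    have h1 : (1:ℝ) ≤ n.factorial := Nat.one_le_cast.2 n.factorial_pos
    have hle : (n.factorial:ℝ) ≤ (n.factorial:ℝ) * n.factorial :=
      le_mul_of_one_le_left h0.le h1
    exact div_le_div_of_nonneg_left (by positivity) h0 hle
  have hE2 : Summable (fun k => E (k + 2)) := (summable_nat_add_iff 2).2 hE
  have hG2 : Summable (fun k => G (k + 2)) := (summable_nat_add_iff 2).2 hG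
  have hexp : ∑' n, E n = Real.exp y := by
    rw [Real.exp_eq_exp_ℝ, NormedSpace.exp_eq_tsum_div]
  have hb : ∑' m, G m = ∑' m : ℕ, (Real.sqrt y) ^ (2 * m + 0)
        / ((Nat.factorial m : ℝ) * (Nat.factorial (m + 0) : ℝ)) := by
    refine tsum_congr fun m => ?_
    simp [hGdef, pow_mul, Real.sq_sqrt hy]
  have hA : ∑' k, E (k + 2) = Real.exp y - 1 - y := by
    have h1 := Summable.tsum_eq_zero_add hE
    have h2 := Summable.tsum_eq_zero_add ((summable_nat_add_iff 1).2 hE)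
    rw [h2] at h1
    rw [hexp] at h1
    have : ∀ k : ℕ, E (k + 1 + 1) = E (k + 2) := fun k => by norm_num
    simp only [this] at h1
    have hE0 : E 0 = 1 := by simp [hEdef]
    have hE1 : E (0 + 1) = y := by simp [hEdef]
    rw [hE0, hE1] at h1
    linarith
  have hBv : ∑' k, G (k + 2) = (∑' m, G m) - 1 - y := by
    have h1 := Summable.tsum_eq_zero_add hG
    have h2 := Summable.tsum_eq_zero_add ((summable_nat_add_iff 1).2 hG)
    rw [h2] at h1
    have : ∀ k : ℕ, G (k + 1 + 1) = G (k + 2) := fun k => by norm_num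
    simp only [this] at h1
    have hG0 : G 0 = 1 := by simp [hGdef]
    have hG1 : G (0 + 1) = y := by simp [hGdef]
    rw [hG0, hG1] at h1
    linarith
  have hterm : ∀ k : ℕ, (((2 + k).factorial : ℝ) - (f (2 + k) (2 - 1) : ℝ)) * y ^ (2 + k)
      / (((2 + k).factorial : ℝ)) ^ 2 = E (2 + k) - G (2 + k) := by
    intro k
    have h1 : f (2 + k) (2 - 1) = 1 := f_one (2 + k)
    have hN : ((2 + k).factorial : ℝ) ≠ 0 := Nat.cast_ne_zero.2 (2 + k).factorial_ne_zero
    rw [h1]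
    simp only [hEdef, hGdef, Nat.cast_one]
    field_simp
  rw [tsum_congr hterm]
  have hsub : ∑' k : ℕ, (E (2 + k) - G (2 + k)) = (∑' k, E (k + 2)) - (∑' k, G (k + 2)) := by
    have e2 : (fun k : ℕ => E (2 + k)) = fun k => E (k + 2) := by
      funext k; rw [add_comm]
    have g2 : (fun k : ℕ => G (2 + k)) = fun k => G (k + 2) := by
      funext k; rw [add_comm]
    calc ∑' k : ℕ, (E (2 + k) - G (2 + k))
        = ∑' k : ℕ, (E (k + 2) - G (k + 2)) := by
          refine tsum_congr fun k => by rw [add_comm 2 k]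
      _ = (∑' k, E (k + 2)) - (∑' k, G (k + 2)) := Summable.tsum_sub hE2 hG2
  rw [hsub, hA, hBv, ← hb]
  have h1 : Real.exp (-y) * Real.exp y = 1 := by
    rw [← Real.exp_add]; simp
  nlinarith [h1]

theorem stmt4 (y : ℝ) (hy : 0 ≤ y) :
    Fdist 2 y = 1 - b 0 (Real.sqrt y) * Real.exp (-y) := by
  unfold Fdist b
  exact aux_stmt4 y hy
end

section
/- For every real y ≥ 0, F(3;y) = 1 − (b_0(√y)² − b_1(√y)²) e^{−y}, where b_j(t) = I_j(2t) = Σ_{m=0}^∞ t^{2m+j}/(m!(m+j)!). -/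
open scoped BigOperators

namespace LIS

open List

/-- 123-avoiding lists -/
def Av (l : List ℕ) : Prop := ∀ a b c : ℕ, [a,b,c].Sublist l → ¬(a < b ∧ b < c)

lemma Av.sublist {l t : List ℕ} (h : Av l) (ht : t.Sublist l) : Av t :=
  fun a b c hs => h a b c (hs.trans ht)

/-- length of the maximal strictly decreasing prefix -/
def decRun (l : List ℕ) : ℕ :=
  Nat.findGreatest (fun p => (l.take p).Pairwise (· > ·)) l.length

lemma decRun_le_length (l : List ℕ) : decRun l ≤ l.length := Nat.findGreatest_le _

lemma pairwise_take_decRun (l : List ℕ) : (l.take (decRun l)).Pairwise (· > ·) :=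
  Nat.findGreatest_spec (P := fun p => (l.take p).Pairwise (· > ·))
    (Nat.zero_le _) List.Pairwise.nil

lemma le_decRun_iff {l : List ℕ} {p : ℕ} (hp : p ≤ l.length) :
    p ≤ decRun l ↔ (l.take p).Pairwise (· > ·) := by
  constructor
  · intro h
    have hsub : l.take p <+ l.take (decRun l) := by
      have : l.take p = (l.take (decRun l)).take p := by
        rw [List.take_take, min_eq_left h]
      rw [this]
      exact List.take_sublist _ _
    exact (pairwise_take_decRun l).sublist hsub
  · exact fun h => Nat.le_findGreatest (P := fun p => (l.take p).Pairwise (· > ·)) hp h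

lemma one_le_decRun {l : List ℕ} (h : l ≠ []) : 1 ≤ decRun l := by
  have hl : 1 ≤ l.length := List.length_pos_iff.2 h
  rw [le_decRun_iff hl]
  cases l with
  | nil => simp at h
  | cons a t => simp

lemma decRun_cons {n : ℕ} {m : List ℕ} (hm : ∀ x ∈ m, x < n) :
    decRun (n :: m) = decRun m + 1 := by
  have key : ∀ q, ((n :: m).take (q+1)).Pairwise (· > ·) ↔ (m.take q).Pairwise (· > ·) := by
    intro q
    rw [List.take_succ_cons, List.pairwise_cons]
    constructor
    · exact fun h => h.2
    · intro h
      exact ⟨fun x hx => hm x (List.take_subset _ _ hx), h⟩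
  apply _root_.le_antisymm
  · have h1 : 1 ≤ decRun (n :: m) := one_le_decRun (by simp)
    obtain ⟨e, he⟩ : ∃ e, decRun (n :: m) = e + 1 := ⟨decRun (n::m) - 1, by omega⟩
    have hel : e ≤ m.length := by
      have := decRun_le_length (n :: m)
      simp [he] at this ⊢
      omega
    have : (m.take e).Pairwise (· > ·) := by
      rw [← key]
      rw [← he]
      exact pairwise_take_decRun _
    have := (le_decRun_iff hel).2 this
    omega
  · have hdl : decRun m + 1 ≤ (n :: m).length := by
      simpa using Nat.succ_le_succ (decRun_le_length m)
    rw [le_decRun_iff hdl, key]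
    exact pairwise_take_decRun m

lemma av_nil : Av [] := by
  intro a b c h
  simp at h

lemma av_cons {n : ℕ} {m : List ℕ} (hm : ∀ x ∈ m, x < n) (h : Av m) : Av (n :: m) := by
  intro a b c hsub ⟨hab, hbc⟩
  rcases List.sublist_cons_iff.1 hsub with h' | ⟨r, hr, hr'⟩
  · exact h a b c h' ⟨hab, hbc⟩
  · injection hr with h1 h2
    subst h1
    have hb : b ∈ m := hr'.subset (h2 ▸ (by simp : b ∈ [b, c]))
    have := hm b hb
    omega

lemma insertIdx_eq_take_cons_drop {m : List ℕ} {s : ℕ} (n : ℕ) (hs : s ≤ m.length) :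
    m.insertIdx s n = m.take s ++ n :: m.drop s := by
  induction m generalizing s with
  | nil => simp at hs; simp [hs]
  | cons a t ih =>
    cases s with
    | zero => simp
    | succ q =>
      simp only [List.insertIdx_succ_cons, List.take_succ_cons, List.drop_succ_cons,
        List.cons_append]
      rw [ih (by simpa using hs)]

lemma av_insertIdx {m : List ℕ} {n s : ℕ} (hm : ∀ x ∈ m, x < n) (hAv : Av m)
    (hs : s ≤ m.length) (hdec : (m.take s).Pairwise (· > ·)) :
    Av (m.insertIdx s n) := by
  intro a b c hsub ⟨hab, hbc⟩
  rw [insertIdx_eq_take_cons_drop n hs] at hsub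
  rcases List.sublist_append_iff.1 hsub with ⟨t₁, t₂, ht, h1, h2⟩
  -- t₁ is a prefix of [a,b,c]
  match t₁, ht with
  | [], ht =>
    simp only [List.nil_append] at ht
    subst ht
    rcases List.sublist_cons_iff.1 h2 with h' | ⟨r, hr, hr'⟩
    · exact hAv a b c (h'.trans (List.drop_sublist _ _)) ⟨hab, hbc⟩
    · injection hr with e1 e2
      subst e1
      have hb : b ∈ m := (List.drop_subset _ _) (hr'.subset (e2 ▸ (by simp : b ∈ [b, c])))
      exact absurd hab (by have := hm b hb; omega)
  | [x], ht =>
    simp only [List.singleton_append, List.cons.injEq] at ht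
    obtain ⟨e1, e2⟩ := ht
    subst e1; subst e2
    rcases List.sublist_cons_iff.1 h2 with h' | ⟨r, hr, hr'⟩
    · have : [a] ++ [b,c] <+ m.take s ++ m.drop s := List.Sublist.append h1 h'
      rw [List.take_append_drop] at this
      exact hAv a b c this ⟨hab, hbc⟩
    · injection hr with e1 e2
      subst e1
      have hc : c ∈ m := (List.drop_subset _ _) (hr'.subset (e2 ▸ (by simp : c ∈ [c])))
      exact absurd hbc (by have := hm c hc; omega)
  | [x, y], ht =>
    simp only [List.cons_append, List.singleton_append, List.cons.injEq] at ht
    obtain ⟨e1, e2, e3⟩ := ht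
    subst e1; subst e2
    have := List.pairwise_iff_forall_sublist.1 hdec h1
    omega
  | [x, y, z], ht =>
    simp only [List.cons_append, List.cons.injEq] at ht
    obtain ⟨e1, e2, e3, e4⟩ := ht
    subst e1; subst e2; subst e3
    exact hAv a b c (h1.trans (List.take_sublist _ _)) ⟨hab, hbc⟩

lemma decRun_insertIdx {m : List ℕ} {n s : ℕ} (hm : ∀ x ∈ m, x < n)
    (h1 : 1 ≤ s) (hsd : s ≤ decRun m) :
    decRun (m.insertIdx s n) = s := by
  have hsl : s ≤ m.length := hsd.trans (decRun_le_length m)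
  have heq : m.insertIdx s n = m.take s ++ n :: m.drop s := insertIdx_eq_take_cons_drop n hsl
  have hlen : (m.insertIdx s n).length = m.length + 1 := List.length_insertIdx_of_le_length hsl n
  have hts : (m.take s).length = s := by rw [List.length_take]; omega
  apply _root_.le_antisymm
  · by_contra hcon
    push_neg at hcon
    have hsp : s + 1 ≤ decRun (m.insertIdx s n) := hcon
    have hpw : ((m.insertIdx s n).take (s+1)).Pairwise (· > ·) := by
      have hl : s + 1 ≤ (m.insertIdx s n).length := by omega
      exact (le_decRun_iff hl).1 hsp
    have htake : (m.insertIdx s n).take (s+1) = m.take s ++ [n] := by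
      rw [heq]
      rw [show s + 1 = (m.take s).length + 1 by omega]
      rw [List.take_append]
      simp
    rw [htake, List.pairwise_append] at hpw
    obtain ⟨x, hx⟩ : ∃ x, x ∈ m.take s := by
      have : (m.take s) ≠ [] := by
        intro hnil
        rw [hnil] at hts
        simp at hts
        omega
      exact List.exists_mem_of_ne_nil _ this
    have hxn : x > n := hpw.2.2 x hx n (by simp)
    have := hm x (List.take_subset _ _ hx)
    omega
  · have hl : s ≤ (m.insertIdx s n).length := by omega
    rw [le_decRun_iff hl]
    have : (m.insertIdx s n).take s = m.take s := by
      rw [heq, List.take_left' hts]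
    rw [this]
    exact (le_decRun_iff hsl).1 hsd

lemma insertIdx_eraseIdx_self {l : List ℕ} {i : ℕ} (h : i < l.length) :
    (l.eraseIdx i).insertIdx i l[i] = l := by
  have hlen : (l.eraseIdx i).length = l.length - 1 := by
    rw [List.length_eraseIdx]; simp [h]
  have hi : i ≤ (l.eraseIdx i).length := by omega
  rw [insertIdx_eq_take_cons_drop _ hi]
  rw [List.eraseIdx_eq_take_drop_succ]
  have h1 : (l.take i).length = i := by rw [List.length_take]; omega
  rw [List.take_left' h1, List.drop_left' h1]
  rw [← List.drop_eq_getElem_cons h, List.take_append_drop]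

open scoped Classical

noncomputable def permsF (n : ℕ) : Finset (List ℕ) := ((List.range n).permutations).toFinset

lemma mem_permsF {n : ℕ} {l : List ℕ} : l ∈ permsF n ↔ l.Perm (List.range n) := by
  simp [permsF, List.mem_permutations]

noncomputable def AvS (n : ℕ) : Finset (List ℕ) := (permsF n).filter Av

lemma mem_AvS {n : ℕ} {l : List ℕ} : l ∈ AvS n ↔ l.Perm (List.range n) ∧ Av l := by
  simp [AvS, Finset.mem_filter, mem_permsF]

lemma length_of_perm {n : ℕ} {l : List ℕ} (h : l.Perm (List.range n)) : l.length = n := by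
  simpa using h.length_eq

lemma nodup_of_perm {n : ℕ} {l : List ℕ} (h : l.Perm (List.range n)) : l.Nodup :=
  h.nodup_iff.2 List.nodup_range

lemma mem_iff_lt {n : ℕ} {l : List ℕ} (h : l.Perm (List.range n)) {x : ℕ} :
    x ∈ l ↔ x < n := by rw [h.mem_iff, List.mem_range]

lemma perm_cons_range {n : ℕ} {m : List ℕ} :
    (n :: m).Perm (List.range (n+1)) ↔ m.Perm (List.range n) := by
  have haux : (List.range (n+1)).Perm (n :: List.range n) := by
    rw [List.range_succ]
    exact List.perm_append_singleton _ _
  constructor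
  · intro h
    exact (h.trans haux).cons_inv
  · intro h
    exact (h.cons n).trans haux.symm

lemma mem_lt_of_cons_perm {n : ℕ} {m : List ℕ} (h : (n :: m).Perm (List.range (n+1))) :
    ∀ x ∈ m, x < n := by
  intro x hx
  have hnd : (n :: m).Nodup := nodup_of_perm h
  have hxl : x < n + 1 := (mem_iff_lt h).1 (List.mem_cons_of_mem _ hx)
  have : x ≠ n := by
    rintro rfl
    exact (List.nodup_cons.1 hnd).1 hx
  omega

noncomputable def Acard (n s : ℕ) : ℕ := ((AvS n).filter (fun l => decRun l = s)).card

noncomputable def Tcard (n s : ℕ) : ℕ := ((AvS n).filter (fun l => s ≤ decRun l)).card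

lemma Tsplit (n s : ℕ) : Tcard n s = Acard n s + Tcard n (s+1) := by
  rw [Tcard, Acard, Tcard]
  rw [← Finset.card_filter_add_card_filter_not
    (s := (AvS n).filter (fun l => s ≤ decRun l)) (p := fun l => decRun l = s)]
  congr 1
  · rw [Finset.filter_filter]
    congr 1
    apply Finset.filter_congr
    intro l _
    constructor
    · exact fun h => h.2
    · intro h; omega
  · rw [Finset.filter_filter]
    congr 1
    apply Finset.filter_congr
    intro l _
    constructor
    · intro h; omega
    · intro h; omega

lemma Tzero {n s : ℕ} (h : n < s) : Tcard n s = 0 := by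
  rw [Tcard, Finset.card_eq_zero, Finset.filter_eq_empty_iff]
  intro l hl
  have hlen : l.length = n := length_of_perm (mem_AvS.1 hl).1
  have := decRun_le_length l
  omega

lemma Acard_zero {n : ℕ} (h : 1 ≤ n) : Acard n 0 = 0 := by
  rw [Acard, Finset.card_eq_zero, Finset.filter_eq_empty_iff]
  intro l hl
  have hlen : l.length = n := length_of_perm (mem_AvS.1 hl).1
  have : l ≠ [] := by
    intro hnil
    rw [hnil] at hlen
    simp at hlen
    omega
  have := one_le_decRun this
  omega

lemma Tcard00 : Tcard 0 0 = 1 := by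
  have h : AvS 0 = {([] : List ℕ)} := by
    ext l
    rw [mem_AvS]
    simp only [List.range_zero, Finset.mem_singleton]
    constructor
    · rintro ⟨h1, -⟩
      exact List.Perm.eq_nil h1
    · rintro rfl
      exact ⟨List.Perm.refl _, av_nil⟩
  rw [Tcard, h]
  rw [Finset.filter_true_of_mem (fun l _ => Nat.zero_le _)]
  rfl

lemma cons_mem_iff {n s : ℕ} {m : List ℕ} :
    ((n :: m) ∈ AvS (n+1) ∧ decRun (n :: m) = s + 1) ↔ (m ∈ AvS n ∧ decRun m = s) := by
  constructor
  · rintro ⟨hm, hd⟩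
    rw [mem_AvS] at hm
    have hx : ∀ x ∈ m, x < n := mem_lt_of_cons_perm hm.1
    have hperm : m.Perm (List.range n) := perm_cons_range.1 hm.1
    have hAv : Av m := hm.2.sublist (List.sublist_cons_self _ _)
    rw [decRun_cons hx] at hd
    exact ⟨mem_AvS.2 ⟨hperm, hAv⟩, by omega⟩
  · rintro ⟨hm, hd⟩
    rw [mem_AvS] at hm
    have hcp : (n :: m).Perm (List.range (n+1)) := perm_cons_range.2 hm.1
    have hx : ∀ x ∈ m, x < n := mem_lt_of_cons_perm hcp
    refine ⟨mem_AvS.2 ⟨hcp, av_cons hx hm.2⟩, ?_⟩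
    rw [decRun_cons hx, hd]

lemma card_head (n s : ℕ) :
    (((AvS (n+1)).filter (fun l => decRun l = s + 1)).filter
      (fun l => l.head? = some n)).card = Acard n s := by
  rw [Acard]
  apply Finset.card_bij' (i := fun l _ => l.tail) (j := fun (m : List ℕ) _ => n :: m)
  · intro l hl
    simp only [Finset.mem_filter] at hl ⊢
    obtain ⟨⟨h1, h2⟩, h3⟩ := hl
    cases l with
    | nil => simp at h3
    | cons a t =>
      simp only [List.head?_cons, Option.some.injEq] at h3
      subst h3
      simpa using (cons_mem_iff.1 ⟨h1, h2⟩)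
  · intro m hm
    simp only [Finset.mem_filter] at hm ⊢
    obtain ⟨h1, h2⟩ := hm
    have := cons_mem_iff.2 ⟨h1, h2⟩
    exact ⟨⟨this.1, this.2⟩, by simp⟩
  · intro l hl
    simp only [Finset.mem_filter] at hl
    obtain ⟨⟨h1, h2⟩, h3⟩ := hl
    cases l with
    | nil => simp at h3
    | cons a t =>
      simp only [List.head?_cons, Option.some.injEq] at h3
      subst h3
      rfl
  · intro m hm
    rfl

lemma structure_lemma {n s : ℕ} {l : List ℕ} (hperm : l.Perm (List.range (n+1)))
    (hAv : Av l) (hd : decRun l = s + 1) (hh : ¬ l.head? = some n) :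
    ∃ (h : s + 1 < l.length), l[s+1] = n := by
  have hlen : l.length = n + 1 := length_of_perm hperm
  have hnd : l.Nodup := nodup_of_perm hperm
  have hmem : n ∈ l := (mem_iff_lt hperm).2 (by omega)
  have hp : List.idxOf n l < l.length := List.idxOf_lt_length_iff.2 hmem
  set p := List.idxOf n l with hpdef
  have hpn : l[p] = n := List.getElem_idxOf hp
  have hlnil : l ≠ [] := by
    intro h; rw [h] at hlen; simp at hlen
  have hp0 : p ≠ 0 := by
    intro h0
    apply hh
    rw [List.head?_eq_getElem?, List.getElem?_eq_getElem (by omega : 0 < l.length)]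
    simp only [h0] at hpn
    exact congrArg some hpn
  -- upper bound on entries
  have hle : ∀ x ∈ l, x ≤ n := by
    intro x hx
    have := (mem_iff_lt hperm).1 hx
    omega
  -- p ≤ decRun l
  have h1 : p ≤ decRun l := by
    rw [le_decRun_iff hp.le]
    rw [List.pairwise_iff_forall_sublist]
    intro x y hsub
    by_contra hxy
    have hxy' : x ≤ y := by omega
    have hnds : [x, y].Nodup := (hsub.trans (List.take_sublist _ _)).nodup hnd
    have hxney : x ≠ y := by simp at hnds; exact hnds
    have hxlty : x < y := lt_of_le_of_ne hxy' hxney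
    have hymem : y ∈ l.take p := hsub.subset (by simp)
    have hyn : y ≠ n := by
      rintro rfl
      obtain ⟨i, hi, hig⟩ := List.mem_take_iff_getElem.1 hymem
      have hip : i < p := lt_of_lt_of_le hi (min_le_left _ _)
      have : i = p := by
        apply List.Nodup.getElem_inj_iff hnd |>.1
        rw [hig, hpn]
      omega
    have hyl : y < n := by
      have := hle y (List.take_subset _ _ hymem)
      omega
    have htrip : [x, y] ++ [n] <+ l.take p ++ l.drop p := by
      apply List.Sublist.append hsub
      rw [List.drop_eq_getElem_cons hp, hpn]
      simp
    rw [List.take_append_drop] at htrip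
    exact hAv x y n htrip ⟨hxlty, hyl⟩
  -- decRun l ≤ p
  have h2 : decRun l ≤ p := by
    by_contra hcon
    push_neg at hcon
    have hpw : (l.take (p+1)).Pairwise (· > ·) :=
      (le_decRun_iff (by omega)).1 hcon
    have hlt : (l.take (p+1)).length = p + 1 := by
      rw [List.length_take]; omega
    rw [List.pairwise_iff_get] at hpw
    have := hpw ⟨p - 1, by omega⟩ ⟨p, by omega⟩ (by simp [Fin.lt_def]; omega)
    simp only [List.get_eq_getElem, List.getElem_take] at this
    rw [hpn] at this
    have hmm : l[p-1] ∈ l := List.getElem_mem _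
    have := hle _ hmm
    omega
  have hps : p = s + 1 := by omega
  rw [← hps]
  exact ⟨by omega, hpn⟩

lemma card_tail (n s : ℕ) :
    (((AvS (n+1)).filter (fun l => decRun l = s + 1)).filter
      (fun l => ¬ l.head? = some n)).card
      = Tcard n (s+1) := by
  rw [Tcard]
  apply Finset.card_bij' (i := fun l _ => l.eraseIdx (s+1))
    (j := fun (m : List ℕ) _ => m.insertIdx (s+1) n)
  · -- forward membership
    intro l hl
    simp only [Finset.mem_filter] at hl ⊢
    obtain ⟨⟨h1, h2⟩, h3⟩ := hl
    rw [mem_AvS] at h1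
    obtain ⟨hperm, hAv⟩ := h1
    obtain ⟨hsl, hgn⟩ := structure_lemma hperm hAv h2 h3
    have hlen : l.length = n + 1 := length_of_perm hperm
    set m := l.eraseIdx (s+1) with hm
    have hmlen : m.length = n := by
      rw [hm, List.length_eraseIdx]
      simp only [hsl, if_true]
      omega
    have hins : m.insertIdx (s+1) n = l := by
      have := insertIdx_eraseIdx_self hsl
      rw [hgn] at this
      exact this
    have hpc : (n :: m).Perm (List.range (n+1)) := by
      have : (m.insertIdx (s+1) n).Perm (n :: m) :=
        List.perm_insertIdx n m (by omega)
      exact (this.symm.trans (hins ▸ hperm))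
    have hmperm : m.Perm (List.range n) := perm_cons_range.1 hpc
    have hmAv : Av m := hAv.sublist (hm ▸ List.eraseIdx_sublist l (s+1))
    have htake : m.take (s+1) = l.take (s+1) := by
      rw [hm, List.eraseIdx_eq_take_drop_succ]
      exact List.take_left' (by rw [List.length_take]; omega)
    have hsd : s + 1 ≤ decRun m := by
      rw [le_decRun_iff (by omega), htake]
      have := pairwise_take_decRun l
      rw [h2] at this
      exact this
    exact ⟨mem_AvS.2 ⟨hmperm, hmAv⟩, hsd⟩
  · -- backward membership
    intro m hm
    simp only [Finset.mem_filter] at hm ⊢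
    obtain ⟨h1, h2⟩ := hm
    rw [mem_AvS] at h1
    obtain ⟨hmperm, hmAv⟩ := h1
    have hmlen : m.length = n := length_of_perm hmperm
    have hsl : s + 1 ≤ m.length := by
      have := decRun_le_length m
      omega
    have hmlt : ∀ x ∈ m, x < n := fun x hx => (mem_iff_lt hmperm).1 hx
    have hpw : (m.take (s+1)).Pairwise (· > ·) := (le_decRun_iff hsl).1 h2
    have hAvl : Av (m.insertIdx (s+1) n) := av_insertIdx hmlt hmAv hsl hpw
    have hdr : decRun (m.insertIdx (s+1) n) = s + 1 :=
      decRun_insertIdx hmlt (by omega) h2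
    have hpl : (m.insertIdx (s+1) n).Perm (List.range (n+1)) := by
      have : (m.insertIdx (s+1) n).Perm (n :: m) := List.perm_insertIdx n m hsl
      exact this.trans (perm_cons_range.2 hmperm)
    have hlen' : (m.insertIdx (s+1) n).length = m.length + 1 :=
      List.length_insertIdx_of_le_length hsl n
    have hget0 : (m.insertIdx (s+1) n)[0] = m[0]'(by omega) :=
      List.getElem_insertIdx_of_lt (by omega) (by omega)
    have hh : ¬ (m.insertIdx (s+1) n).head? = some n := by
      rw [List.head?_eq_getElem?, List.getElem?_eq_getElem (by omega : 0 < (m.insertIdx (s+1) n).length)]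
      rw [hget0]
      intro hcon
      have : m[0]'(by omega) ∈ m := List.getElem_mem _
      have := hmlt _ this
      simp at hcon
      omega
    exact ⟨⟨mem_AvS.2 ⟨hpl, hAvl⟩, hdr⟩, hh⟩
  · -- j ∘ i = id
    intro l hl
    simp only [Finset.mem_filter] at hl
    obtain ⟨⟨h1, h2⟩, h3⟩ := hl
    rw [mem_AvS] at h1
    obtain ⟨hperm, hAv⟩ := h1
    obtain ⟨hsl, hgn⟩ := structure_lemma hperm hAv h2 h3
    have := insertIdx_eraseIdx_self hsl
    rw [hgn] at this
    exact this
  · -- i ∘ j = id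
    intro m hm
    exact List.eraseIdx_insertIdx_self n

lemma Acard_succ (n s : ℕ) : Acard (n+1) (s+1) = Acard n s + Tcard n (s+1) := by
  rw [Acard]
  rw [← Finset.card_filter_add_card_filter_not
    (s := (AvS (n+1)).filter (fun l => decRun l = s+1)) (p := fun l => l.head? = some n)]
  rw [card_head, card_tail]

lemma A_eq_T (n s : ℕ) : Acard (n+1) (s+1) = Tcard n s := by
  rw [Acard_succ]
  exact (Tsplit n s).symm

lemma Trec (n s : ℕ) : Tcard (n+1) (s+1) = Tcard n s + Tcard (n+1) (s+2) := by
  rw [Tsplit (n+1) (s+1), A_eq_T]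

lemma T_zero_eq_one (n : ℕ) : Tcard (n+1) 0 = Tcard (n+1) 1 := by
  rw [Tsplit (n+1) 0, Acard_zero (by omega)]
  simp

lemma Tclosed : ∀ n s d : ℕ, s + d = 2 * n → n ≤ d →
    (Tcard n s : ℤ) = (d.choose n : ℤ) - (d.choose (n+1) : ℤ) := by
  intro n
  induction n with
  | zero =>
    intro s d hsd hnd
    have hs : s = 0 := by omega
    have hd : d = 0 := by omega
    subst hs; subst hd
    rw [Tcard00]
    simp
  | succ n ih =>
    -- downward induction via upward induction on d
    have key : ∀ d, n + 1 ≤ d → ∀ s, s + d = 2 * (n+1) →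
        (Tcard (n+1) s : ℤ) = (d.choose (n+1) : ℤ) - (d.choose (n+2) : ℤ) := by
      intro d hd
      induction d, hd using Nat.le_induction with
      | base =>
        intro s hs
        have hs' : s = n + 1 := by omega
        subst hs'
        rw [Trec n n, Tzero (by omega : n + 1 < n + 2)]
        rw [Nat.add_zero]
        rw [ih n n (by omega) (by omega)]
        rw [Nat.choose_self, Nat.choose_self]
        rw [Nat.choose_succ_self, Nat.choose_succ_self]
      | succ d hd ihd =>
        intro s hs
        cases s with
        | zero =>
          have hd' : d = 2 * n + 1 := by omega
          subst hd'
          rw [T_zero_eq_one n]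
          rw [ihd 1 (by omega)]
          have e1 : (2*n+1+1) = (2*n+1) + 1 := by omega
          rw [e1]
          rw [Nat.choose_succ_succ (2*n+1) n, Nat.choose_succ_succ (2*n+1) (n+1)]
          have e2 : (2*n+1).choose n = (2*n+1).choose (n+1) := by
            have := Nat.choose_symm (by omega : n ≤ 2*n+1)
            have e3 : 2*n+1-n = n+1 := by omega
            rw [e3] at this
            exact this.symm
          push_cast
          rw [e2]
          ring
        | succ s' =>
          rw [Trec n s']
          have h1 : (Tcard n s' : ℤ) = (d.choose n : ℤ) - (d.choose (n+1) : ℤ) :=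
            ih s' d (by omega) (by omega)
          have h2 : (Tcard (n+1) (s'+2) : ℤ) = (d.choose (n+1) : ℤ) - (d.choose (n+2) : ℤ) :=
            ihd (s'+2) (by omega)
          push_cast [h1, h2]
          rw [Nat.choose_succ_succ d n, Nat.choose_succ_succ d (n+1)]
          push_cast
          ring
    intro s d hsd hnd
    exact key d hnd s hsd

lemma Tcard_catalan (n : ℕ) : Tcard n 0 = catalan n := by
  have h := Tclosed n 0 (2*n) (by omega) (by omega)
  have hcb : ((2*n).choose n : ℤ) = ((n : ℤ)+1) * catalan n := by
    have h0 := succ_mul_catalan_eq_centralBinom n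
    have h1 : (2*n).choose n = Nat.centralBinom n := rfl
    rw [h1]
    exact_mod_cast h0.symm
  have hc1 : ((2*n).choose (n+1) : ℤ) * (n+1) = ((2*n).choose n : ℤ) * n := by
    have := Nat.choose_succ_right_eq (2*n) n
    have e : 2*n - n = n := by omega
    rw [e] at this
    exact_mod_cast this
  have hn1 : ((n : ℤ) + 1) ≠ 0 := by positivity
  have : ((Tcard n 0 : ℤ)) * (n+1) = (catalan n : ℤ) * (n+1) := by
    rw [h]
    rw [sub_mul, hc1, hcb]
    ring
  have := mul_right_cancel₀ hn1 this
  exact_mod_cast this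

lemma strictMono_fin3 {α : Type*} [Preorder α] {g : Fin 3 → α}
    (h01 : g 0 < g 1) (h12 : g 1 < g 2) : StrictMono g := by
  intro i j hij
  obtain ⟨iv, hi⟩ := i
  obtain ⟨jv, hj⟩ := j
  have hij' : iv < jv := hij
  interval_cases iv <;> interval_cases jv <;>
    first
      | omega
      | exact h01
      | exact h12
      | exact h01.trans h12

lemma cond_iff_av {n : ℕ} (σ : Equiv.Perm (Fin n)) :
    (∀ l, hasIncSubseq n σ l → l ≤ 2) ↔ Av (List.ofFn (fun i => (σ i : ℕ))) := by
  set L := List.ofFn (fun i => (σ i : ℕ)) with hLdef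
  have hlen : L.length = n := List.length_ofFn
  have hget : ∀ j : Fin L.length, L.get j = (σ (Fin.cast hlen j) : ℕ) := by
    intro j
    exact List.get_ofFn (fun i => (σ i : ℕ)) j
  constructor
  · intro h
    by_contra hav
    rw [Av] at hav
    push_neg at hav
    obtain ⟨a, b, c, hsub, hab, hbc⟩ := hav
    obtain ⟨e, he⟩ := List.sublist_iff_exists_fin_orderEmbedding_get_eq.1 hsub
    set s : Fin 3 → Fin n := fun i => Fin.cast hlen (e i) with hsdef
    have hsm : StrictMono s := by
      intro i j hij
      simp only [hsdef, Fin.lt_def, Fin.coe_cast]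
      exact e.strictMono hij
    have hv : ∀ i : Fin 3, ((σ (s i)) : ℕ) = [a,b,c].get i := by
      intro i
      rw [he i, hget (e i)]
    have ha : ((σ (s 0)) : ℕ) = a := hv 0
    have hb : ((σ (s 1)) : ℕ) = b := hv 1
    have hc : ((σ (s 2)) : ℕ) = c := hv 2
    have hcm : StrictMono (⇑σ ∘ s) := by
      apply strictMono_fin3
      · show σ (s 0) < σ (s 1)
        rw [Fin.lt_def, ha, hb]
        exact hab
      · show σ (s 1) < σ (s 2)
        rw [Fin.lt_def, hb, hc]
        exact hbc
    have := h 3 ⟨s, hsm, hcm⟩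
    omega
  · intro hav l hl
    by_contra hcon
    push_neg at hcon
    have h3 : 3 ≤ l := hcon
    obtain ⟨s, hs, hσs⟩ := hl
    set s' : Fin 3 → Fin n := fun i => s (Fin.castLE h3 i) with hs'def
    have hcle : StrictMono (fun i : Fin 3 => Fin.castLE h3 i) :=
      fun _ _ hij => hij
    have hs' : StrictMono s' := hs.comp hcle
    have hσs' : StrictMono (⇑σ ∘ s') := by
      have heq : ⇑σ ∘ s' = (⇑σ ∘ s) ∘ (fun i : Fin 3 => Fin.castLE h3 i) := rfl
      rw [heq]
      exact hσs.comp hcle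
    set x := ((σ (s' 0)) : ℕ) with hx
    set y := ((σ (s' 1)) : ℕ) with hy
    set z := ((σ (s' 2)) : ℕ) with hz
    have hxy : x < y := hσs' (show (0 : Fin 3) < 1 by decide)
    have hyz : y < z := hσs' (show (1 : Fin 3) < 2 by decide)
    have hsub : [x, y, z] <+ L := by
      apply List.sublist_iff_exists_fin_orderEmbedding_get_eq.2
      refine ⟨OrderEmbedding.ofStrictMono (fun i => Fin.cast hlen.symm (s' i)) ?_, ?_⟩
      · intro i j hij
        simp only [Fin.lt_def, Fin.coe_cast]
        exact hs' hij
      · intro i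
        obtain ⟨iv, hi⟩ := i
        have hi3 : iv < 3 := by simpa using hi
        interval_cases iv <;> simp only [hget] <;> rfl
    exact hav x y z hsub ⟨hxy, hyz⟩

lemma ofFn_perm_range {n : ℕ} (σ : Equiv.Perm (Fin n)) :
    (List.ofFn (fun i => ((σ i) : ℕ))).Perm (List.range n) := by
  have hnd : (List.ofFn (fun i => ((σ i) : ℕ))).Nodup := by
    rw [List.nodup_ofFn]
    exact Fin.val_injective.comp σ.injective
  rw [List.perm_ext_iff_of_nodup hnd List.nodup_range]
  intro a
  rw [List.mem_ofFn, List.mem_range]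
  constructor
  · rintro ⟨i, rfl⟩
    exact (σ i).isLt
  · intro ha
    exact ⟨σ.symm ⟨a, ha⟩, by simp⟩

lemma card_av_eq (n : ℕ) :
    Nat.card {σ : Equiv.Perm (Fin n) // Av (List.ofFn (fun i => ((σ i) : ℕ)))}
      = Tcard n 0 := by
  have e2 : Tcard n 0 = (AvS n).card := by
    rw [Tcard, Finset.filter_true_of_mem (fun l _ => Nat.zero_le _)]
  rw [e2, ← Nat.card_eq_finsetCard]
  apply Nat.card_congr
  apply Equiv.ofBijective
    (f := fun σp => (⟨List.ofFn (fun i => ((σp.1 i) : ℕ)),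
      mem_AvS.2 ⟨ofFn_perm_range σp.1, σp.2⟩⟩ : {l // l ∈ AvS n}))
  constructor
  · rintro ⟨σ, hσ⟩ ⟨τ, hτ⟩ hst
    simp only [Subtype.mk.injEq] at hst ⊢
    have := List.ofFn_injective hst
    ext i
    exact congrFun this i ▸ rfl
  · rintro ⟨l, hl⟩
    rw [mem_AvS] at hl
    obtain ⟨hperm, hAv⟩ := hl
    have hlen : l.length = n := length_of_perm hperm
    have hnd : l.Nodup := nodup_of_perm hperm
    set g : Fin n → Fin n := fun i => ⟨l.get (Fin.cast hlen.symm i),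
      (mem_iff_lt hperm).1 (List.get_mem l _)⟩ with hgdef
    have hginj : Function.Injective g := by
      intro i j hij
      have h1 : l.get (Fin.cast hlen.symm i) = l.get (Fin.cast hlen.symm j) := by
        simpa [hgdef, Fin.ext_iff] using hij
      have := List.nodup_iff_injective_get.1 hnd h1
      simpa [Fin.ext_iff] using this
    have hgbij : Function.Bijective g := Finite.injective_iff_bijective.1 hginj
    set σ : Equiv.Perm (Fin n) := Equiv.ofBijective g hgbij with hσdef
    have hσapp : ∀ i, σ i = g i := fun i => rfl
    have hoffn : List.ofFn (fun i => ((σ i) : ℕ)) = l := by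
      apply List.ext_get
      · simp [hlen]
      · intro i h1 h2
        simp only [List.get_ofFn, hσapp]
        rfl
    refine ⟨⟨σ, ?_⟩, ?_⟩
    · rw [hoffn]
      exact hAv
    · simp only [Subtype.mk.injEq]
      exact hoffn

lemma f_aux_eq_catalan (n : ℕ) :
    Nat.card {σ : Equiv.Perm (Fin n) // ∀ l, hasIncSubseq n σ l → l ≤ 2} = catalan n := by
  rw [Nat.card_congr (Equiv.subtypeEquivRight (fun σ => by rw [cond_iff_av]))]
  rw [card_av_eq, Tcard_catalan]

end LIS

namespace LIS2

open Finset

lemma summable_coeff {c : ℕ → ℕ} (hc : ∀ n, (c n : ℝ) ≤ 4 ^ n) {t : ℝ} (ht : 0 ≤ t) :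
    Summable (fun n => (c n : ℝ) * t ^ (2 * n) / ((n.factorial : ℝ)) ^ 2) := by
  apply Summable.of_nonneg_of_le (fun n => by positivity) (fun n => ?_)
    (Real.summable_pow_div_factorial (4 * t ^ 2))
  have h1 : (1 : ℝ) ≤ (n.factorial : ℝ) := by
    exact_mod_cast Nat.one_le_iff_ne_zero.2 (Nat.factorial_ne_zero n)
  have h2 : (0 : ℝ) < (n.factorial : ℝ) := by positivity
  calc (c n : ℝ) * t ^ (2 * n) / ((n.factorial : ℝ)) ^ 2
      ≤ (4 ^ n : ℝ) * t ^ (2 * n) / ((n.factorial : ℝ) * 1) := by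
        rw [pow_two]
        gcongr
        exact hc n
    _ = (4 * t ^ 2) ^ n / (n.factorial : ℝ) := by
        rw [mul_pow, pow_mul]
        ring
lemma summable_b (j : ℕ) {t : ℝ} (ht : 0 ≤ t) :
    Summable (fun m => t ^ (2 * m + j) / ((Nat.factorial m : ℝ) * (Nat.factorial (m + j) : ℝ))) := by
  apply Summable.of_nonneg_of_le (fun n => by positivity) (fun m => ?_)
    ((Real.summable_pow_div_factorial (t ^ 2)).mul_right (t ^ j))
  have h1 : (1 : ℝ) ≤ ((m + j).factorial : ℝ) := by
    exact_mod_cast Nat.one_le_iff_ne_zero.2 (Nat.factorial_ne_zero _)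
  calc t ^ (2 * m + j) / ((Nat.factorial m : ℝ) * (Nat.factorial (m + j) : ℝ))
      ≤ t ^ (2 * m + j) / ((Nat.factorial m : ℝ) * 1) := by
        gcongr
    _ = (t ^ 2) ^ m / (Nat.factorial m : ℝ) * t ^ j := by
        rw [pow_add, pow_mul]
        ring

lemma choose_le_two_pow (n k : ℕ) : n.choose k ≤ 2 ^ n := by
  rcases le_or_gt k n with h | h
  · calc n.choose k ≤ ∑ m ∈ range (n+1), n.choose m :=
        Finset.single_le_sum (fun i _ => Nat.zero_le _) (by simp [Nat.lt_succ_of_le h])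
    _ = 2 ^ n := Nat.sum_range_choose n
  · rw [Nat.choose_eq_zero_of_lt h]
    positivity

lemma choose2_le_four_pow (n k : ℕ) : ((2*n).choose k : ℝ) ≤ 4 ^ n := by
  have h := choose_le_two_pow (2*n) k
  have h2 : (2:ℕ) ^ (2*n) = 4 ^ n := by
    rw [pow_mul]
    norm_num
  rw [h2] at h
  exact_mod_cast h

lemma catalan_le_four_pow (n : ℕ) : ((catalan n : ℕ) : ℝ) ≤ 4 ^ n := by
  have h1 : catalan n ≤ (2*n).choose n := by
    have h := succ_mul_catalan_eq_centralBinom n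
    have : catalan n ≤ (n+1) * catalan n := Nat.le_mul_of_pos_left _ (by omega)
    rw [h] at this
    exact this
  calc ((catalan n : ℕ) : ℝ) ≤ ((2*n).choose n : ℝ) := by exact_mod_cast h1
    _ ≤ 4 ^ n := choose2_le_four_pow n n

lemma catalan_sub_real (n : ℕ) :
    ((2*n).choose n : ℝ) - ((2*n).choose (n+1) : ℝ) = (catalan n : ℝ) := by
  have hcb : ((2*n).choose n : ℝ) = ((n : ℝ)+1) * catalan n := by
    have h0 := succ_mul_catalan_eq_centralBinom n
    have h1 : (2*n).choose n = Nat.centralBinom n := rfl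
    rw [h1]
    exact_mod_cast h0.symm
  have hc1 : ((2*n).choose (n+1) : ℝ) * ((n:ℝ)+1) = ((2*n).choose n : ℝ) * n := by
    have h2 := Nat.choose_succ_right_eq (2*n) n
    have e : 2*n - n = n := by omega
    rw [e] at h2
    exact_mod_cast h2
  have hn1 : ((n : ℝ) + 1) ≠ 0 := by positivity
  apply mul_right_cancel₀ hn1
  rw [sub_mul, hc1, hcb]
  ring

lemma cast_choose_add {k l : ℕ} :
    ((k+l).choose k : ℝ) = ((k+l).factorial : ℝ) / ((k.factorial : ℝ) * (l.factorial : ℝ)) := by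
  rw [Nat.cast_choose ℝ (Nat.le_add_right k l)]
  congr 2
  rw [Nat.add_sub_cancel_left]

lemma summable_norm_b (j : ℕ) {t : ℝ} (ht : 0 ≤ t) :
    Summable (fun m => ‖t ^ (2 * m + j) / ((Nat.factorial m : ℝ) * (Nat.factorial (m + j) : ℝ))‖) :=
  (summable_b j ht).congr (fun n => (Real.norm_of_nonneg (by positivity)).symm)

lemma coeff0 {t : ℝ} (n : ℕ) :
    ∑ kl ∈ antidiagonal n,
      (t ^ (2 * kl.1 + 0) / ((Nat.factorial kl.1 : ℝ) * (Nat.factorial (kl.1 + 0) : ℝ))) *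
      (t ^ (2 * kl.2 + 0) / ((Nat.factorial kl.2 : ℝ) * (Nat.factorial (kl.2 + 0) : ℝ)))
      = ((2*n).choose n : ℝ) * t ^ (2*n) / ((n.factorial : ℝ))^2 := by
  have key : ∀ kl ∈ antidiagonal n,
      (t ^ (2 * kl.1 + 0) / ((Nat.factorial kl.1 : ℝ) * (Nat.factorial (kl.1 + 0) : ℝ))) *
      (t ^ (2 * kl.2 + 0) / ((Nat.factorial kl.2 : ℝ) * (Nat.factorial (kl.2 + 0) : ℝ)))
      = ((n.choose kl.1 : ℝ) * (n.choose kl.2 : ℝ)) * (t ^ (2*n) / ((n.factorial : ℝ))^2) := by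
    rintro ⟨k, l⟩ hkl
    rw [Finset.HasAntidiagonal.mem_antidiagonal] at hkl
    subst hkl
    simp only [add_zero]
    have h1 : ((k+l).choose k : ℝ) = ((k+l).factorial : ℝ) / ((k.factorial : ℝ) * (l.factorial : ℝ)) :=
      cast_choose_add
    have h2 : ((k+l).choose l : ℝ) = ((k+l).factorial : ℝ) / ((l.factorial : ℝ) * (k.factorial : ℝ)) := by
      rw [add_comm k l]
      exact cast_choose_add
    rw [h1, h2]
    have hk : (k.factorial : ℝ) ≠ 0 := by positivity
    have hl : (l.factorial : ℝ) ≠ 0 := by positivity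
    have hkl : ((k+l).factorial : ℝ) ≠ 0 := by positivity
    have hpow : t ^ (2*k) * t ^ (2*l) = t ^ (2*(k+l)) := by
      rw [← pow_add]
      congr 1
      ring
    field_simp
    rw [← hpow]
  rw [Finset.sum_congr rfl key, ← Finset.sum_mul]
  have hv : ∑ kl ∈ antidiagonal n, (n.choose kl.1 : ℝ) * (n.choose kl.2 : ℝ)
      = ((2*n).choose n : ℝ) := by
    have := Nat.add_choose_eq n n n
    rw [show n + n = 2*n by ring] at this
    rw [this]
    push_cast
    rfl
  rw [hv]
  ring

lemma b0_sq {t : ℝ} (ht : 0 ≤ t) :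
    b 0 t * b 0 t = ∑' n : ℕ, ((2*n).choose n : ℝ) * t ^ (2*n) / ((n.factorial : ℝ))^2 := by
  rw [b]
  rw [tsum_mul_tsum_eq_tsum_sum_antidiagonal_of_summable_norm
    (summable_norm_b 0 ht) (summable_norm_b 0 ht)]
  exact tsum_congr (fun n => coeff0 n)

lemma coeff1 {t : ℝ} (n : ℕ) :
    ∑ kl ∈ antidiagonal n,
      (t ^ (2 * kl.1 + 1) / ((Nat.factorial kl.1 : ℝ) * (Nat.factorial (kl.1 + 1) : ℝ))) *
      (t ^ (2 * kl.2 + 1) / ((Nat.factorial kl.2 : ℝ) * (Nat.factorial (kl.2 + 1) : ℝ)))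
      = ((2*n+2).choose (n+2) : ℝ) * t ^ (2*n+2) / (((n+1).factorial : ℝ))^2 := by
  have key : ∀ kl ∈ antidiagonal n,
      (t ^ (2 * kl.1 + 1) / ((Nat.factorial kl.1 : ℝ) * (Nat.factorial (kl.1 + 1) : ℝ))) *
      (t ^ (2 * kl.2 + 1) / ((Nat.factorial kl.2 : ℝ) * (Nat.factorial (kl.2 + 1) : ℝ)))
      = (((n+1).choose kl.1 : ℝ) * ((n+1).choose (kl.1+1) : ℝ))
          * (t ^ (2*n+2) / (((n+1).factorial : ℝ))^2) := by
    rintro ⟨k, l⟩ hkl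
    rw [Finset.HasAntidiagonal.mem_antidiagonal] at hkl
    subst hkl
    have h1 : ((k+l+1).choose k : ℝ)
        = ((k+l+1).factorial : ℝ) / ((k.factorial : ℝ) * ((l+1).factorial : ℝ)) := by
      rw [show k+l+1 = k+(l+1) by ring]
      exact cast_choose_add
    have h2 : ((k+l+1).choose (k+1) : ℝ)
        = ((k+l+1).factorial : ℝ) / (((k+1).factorial : ℝ) * (l.factorial : ℝ)) := by
      rw [show k+l+1 = (k+1)+l by ring]
      exact cast_choose_add
    rw [show (k+l)+1 = k+l+1 from rfl, h1, h2]
    have hk : (k.factorial : ℝ) ≠ 0 := by positivity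
    have hl : (l.factorial : ℝ) ≠ 0 := by positivity
    have hk1 : ((k+1).factorial : ℝ) ≠ 0 := by positivity
    have hl1 : ((l+1).factorial : ℝ) ≠ 0 := by positivity
    have hkl1 : ((k+l+1).factorial : ℝ) ≠ 0 := by positivity
    have hpow : t ^ (2*k+1) * t ^ (2*l+1) = t ^ (2*(k+l)+2) := by
      rw [← pow_add]
      congr 1
      ring
    field_simp
    rw [show 2*(k+l)+2 = 2*k+1 + (2*l+1) by ring, pow_add]
    ring
  rw [Finset.sum_congr rfl key, ← Finset.sum_mul]
  have hv : ∑ kl ∈ antidiagonal n, (((n+1).choose kl.1 : ℝ) * ((n+1).choose (kl.1+1) : ℝ))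
      = ((2*n+2).choose (n+2) : ℝ) := by
    have hsymm : ∀ kl ∈ antidiagonal n,
        (((n+1).choose kl.1 : ℝ) * ((n+1).choose (kl.1+1) : ℝ))
        = (((n+1).choose kl.1 : ℝ) * ((n+1).choose kl.2 : ℝ)) := by
      rintro ⟨k, l⟩ hkl
      rw [Finset.HasAntidiagonal.mem_antidiagonal] at hkl
      have : (n+1).choose (k+1) = (n+1).choose l := by
        have h := Nat.choose_symm (show k+1 ≤ n+1 by omega)
        rw [show n+1-(k+1) = l by omega] at h
        exact h.symm
      rw [this]
    rw [Finset.sum_congr rfl hsymm]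
    have := Nat.add_choose_eq (n+1) (n+1) n
    rw [show (n+1) + (n+1) = 2*n+2 by ring] at this
    have hsy : (2*n+2).choose n = (2*n+2).choose (n+2) := by
      have h := Nat.choose_symm (show n ≤ 2*n+2 by omega)
      rw [show 2*n+2-n = n+2 by omega] at h
      exact h.symm
    rw [hsy] at this
    rw [this]
    push_cast
    rfl
  rw [hv]
  ring

lemma b1_sq {t : ℝ} (ht : 0 ≤ t) :
    b 1 t * b 1 t = ∑' n : ℕ, ((2*n+2).choose (n+2) : ℝ) * t ^ (2*n+2) / (((n+1).factorial : ℝ))^2 := by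
  rw [b]
  rw [tsum_mul_tsum_eq_tsum_sum_antidiagonal_of_summable_norm
    (summable_norm_b 1 ht) (summable_norm_b 1 ht)]
  exact tsum_congr (fun n => coeff1 n)

lemma b1_sq' {t : ℝ} (ht : 0 ≤ t) :
    b 1 t * b 1 t = ∑' n : ℕ, ((2*n).choose (n+1) : ℝ) * t ^ (2*n) / ((n.factorial : ℝ))^2 := by
  set g : ℕ → ℝ := fun n => ((2*n).choose (n+1) : ℝ) * t ^ (2*n) / ((n.factorial : ℝ))^2 with hgdef
  have hsum : Summable g :=
    summable_coeff (c := fun n => (2*n).choose (n+1)) (fun n => choose2_le_four_pow n (n+1)) ht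
  have hg0 : g 0 = 0 := by simp [hgdef]
  have hshift : ∀ n : ℕ,
      ((2*n+2).choose (n+2) : ℝ) * t ^ (2*n+2) / (((n+1).factorial : ℝ))^2 = g (n+1) := by
    intro n
    simp only [hgdef]
    rw [show 2*(n+1) = 2*n+2 by ring]
  rw [b1_sq ht, tsum_congr hshift]
  rw [Summable.tsum_eq_zero_add hsum, hg0, zero_add]

lemma b_diff {t : ℝ} (ht : 0 ≤ t) :
    b 0 t ^ 2 - b 1 t ^ 2 = ∑' n : ℕ, (catalan n : ℝ) * t ^ (2*n) / ((n.factorial : ℝ))^2 := by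
  rw [pow_two, pow_two, b0_sq ht, b1_sq' ht]
  rw [← Summable.tsum_sub (summable_coeff (fun n => choose2_le_four_pow n n) ht)
      (summable_coeff (fun n => choose2_le_four_pow n (n+1)) ht)]
  apply tsum_congr
  intro n
  rw [← sub_div, ← sub_mul, catalan_sub_real]

end LIS2

lemma f_two (k : ℕ) : f k 2 = catalan k := by
  rw [f]
  exact LIS.f_aux_eq_catalan k

theorem stmt5 (y : ℝ) (hy : 0 ≤ y) :
    Fdist 3 y = 1 - (b 0 (Real.sqrt y) ^ 2 - b 1 (Real.sqrt y) ^ 2) * Real.exp (-y) := by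
  have ht : 0 ≤ Real.sqrt y := Real.sqrt_nonneg y
  set t := Real.sqrt y with htdef
  have ht2 : t ^ 2 = y := Real.sq_sqrt hy
  have hsummexp : Summable (fun k : ℕ => y ^ k / (k.factorial : ℝ)) :=
    Real.summable_pow_div_factorial y
  have hsumcat : Summable (fun k : ℕ => (catalan k : ℝ) * y ^ k / ((k.factorial : ℝ))^2) := by
    apply (LIS2.summable_coeff (c := catalan) LIS2.catalan_le_four_pow ht).congr
    intro n
    rw [pow_mul, ht2]
  have hexp : ∑' k : ℕ, y ^ k / (k.factorial : ℝ) = Real.exp y := by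
    rw [Real.exp_eq_exp_ℝ, NormedSpace.exp_eq_tsum_div]
  have hcat : ∑' k : ℕ, (catalan k : ℝ) * y ^ k / ((k.factorial : ℝ))^2
      = b 0 t ^ 2 - b 1 t ^ 2 := by
    rw [LIS2.b_diff ht]
    apply tsum_congr
    intro n
    rw [pow_mul, ht2]
  have hterm : ∀ k : ℕ,
      (((3 + k).factorial : ℝ) - (f (3 + k) (3 - 1) : ℝ)) * y ^ (3 + k) / (((3 + k).factorial : ℝ)) ^ 2
      = y ^ (3+k) / (((3+k).factorial : ℝ)) - (catalan (3+k) : ℝ) * y ^ (3+k) / (((3+k).factorial : ℝ))^2 := by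
    intro k
    have hf : f (3+k) (3-1) = catalan (3+k) := f_two (3+k)
    rw [hf]
    have hne : ((3+k).factorial : ℝ) ≠ 0 := by positivity
    field_simp
  have hsum1 : Summable (fun k : ℕ => y ^ (3+k) / (((3+k).factorial : ℝ))) := by
    apply ((summable_nat_add_iff 3).2 hsummexp).congr
    intro k
    rw [add_comm k 3]
  have hsum2 : Summable (fun k : ℕ => (catalan (3+k) : ℝ) * y ^ (3+k) / (((3+k).factorial : ℝ))^2) := by
    apply ((summable_nat_add_iff 3).2 hsumcat).congr
    intro k
    rw [add_comm k 3]
  have hc3 : (1 : ℝ) + y + y^2/2 = ∑ i ∈ Finset.range 3, y ^ i / (i.factorial : ℝ) := by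
    rw [Finset.sum_range_succ, Finset.sum_range_succ, Finset.sum_range_one]
    norm_num [Nat.factorial]
    try ring
  have hc3' : (1 : ℝ) + y + y^2/2
      = ∑ i ∈ Finset.range 3, (catalan i : ℝ) * y ^ i / ((i.factorial : ℝ))^2 := by
    rw [Finset.sum_range_succ, Finset.sum_range_succ, Finset.sum_range_one]
    norm_num [Nat.factorial, catalan_two, catalan_one, catalan_zero]
    try ring
  have tail1 : ∑' k : ℕ, y ^ (3+k) / (((3+k).factorial : ℝ))
      = Real.exp y - (1 + y + y^2/2) := by
    have h := Summable.sum_add_tsum_nat_add (f := fun k : ℕ => y ^ k / (k.factorial : ℝ)) 3 hsummexp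
    rw [hexp] at h
    have h2 : (∑ i ∈ Finset.range 3, y ^ i / (i.factorial : ℝ))
        + ∑' (i : ℕ), y ^ (i+3) / (((i+3).factorial : ℝ)) = Real.exp y := h
    have he : ∑' k : ℕ, y ^ (3+k) / (((3+k).factorial : ℝ))
        = ∑' k : ℕ, y ^ (k+3) / (((k+3).factorial : ℝ)) := by
      apply tsum_congr
      intro k
      rw [add_comm 3 k]
    rw [he, hc3]
    linarith
  have tail2 : ∑' k : ℕ, (catalan (3+k) : ℝ) * y ^ (3+k) / (((3+k).factorial : ℝ))^2
      = (b 0 t ^ 2 - b 1 t ^ 2) - (1 + y + y^2/2) := by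
    have h := Summable.sum_add_tsum_nat_add
      (f := fun k : ℕ => (catalan k : ℝ) * y ^ k / ((k.factorial : ℝ))^2) 3 hsumcat
    rw [hcat] at h
    have h2 : (∑ i ∈ Finset.range 3, (catalan i : ℝ) * y ^ i / ((i.factorial : ℝ))^2)
        + ∑' (i : ℕ), (catalan (i+3) : ℝ) * y ^ (i+3) / (((i+3).factorial : ℝ))^2
        = b 0 t ^ 2 - b 1 t ^ 2 := h
    have he : ∑' k : ℕ, (catalan (3+k) : ℝ) * y ^ (3+k) / (((3+k).factorial : ℝ))^2
        = ∑' k : ℕ, (catalan (k+3) : ℝ) * y ^ (k+3) / (((k+3).factorial : ℝ))^2 := by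
      apply tsum_congr
      intro k
      rw [add_comm 3 k]
    rw [he, hc3']
    linarith
  have hee : Real.exp (-y) * Real.exp y = 1 := by
    rw [← Real.exp_add]
    simp
  simp only [Fdist]
  rw [tsum_congr hterm, Summable.tsum_sub hsum1 hsum2, tail1, tail2]
  calc Real.exp (-y) * ((Real.exp y - (1+y+y^2/2)) - ((b 0 t ^ 2 - b 1 t ^ 2) - (1+y+y^2/2)))
      = Real.exp (-y) * Real.exp y - (b 0 t ^ 2 - b 1 t ^ 2) * Real.exp (-y) := by ring
    _ = 1 - (b 0 t ^ 2 - b 1 t ^ 2) * Real.exp (-y) := by rw [hee]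
end

section
/- For every integer r ≥ 0, as y → 0⁺ one has φ_r(y) = 1 − y^{r+1}/((r+1)!)² + O(y^{r+2}); that is, there exist constants C > 0 and y₀ > 0 such that |φ_r(y) − 1 + y^{r+1}/((r+1)!)²| ≤ C y^{r+2} for all 0 < y < y₀. -/
open scoped BigOperators

-- strict mono Fin n → Fin n is id
lemma strictMono_fin_id {n : ℕ} {s : Fin n → Fin n} (hs : StrictMono s) : s = id := by
  have hsurj : Function.Surjective s :=
    Finite.surjective_of_injective hs.injective
  let e : Fin n ≃o Fin n := StrictMono.orderIsoOfSurjective s hs hsurj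
  funext i
  have := Fin.coe_orderIso_apply e i
  exact Fin.ext this

lemma f_le (k r : ℕ) : f k r ≤ k.factorial := by
  classical
  have := Fintype.card_subtype_le
    (fun σ : Equiv.Perm (Fin k) => ∀ l, hasIncSubseq k σ l → l ≤ r)
  rw [f, Nat.card_eq_fintype_card]
  simpa [Fintype.card_perm] using this

lemma f_of_le {k r : ℕ} (h : k ≤ r) : f k r = k.factorial := by
  have : ∀ σ : Equiv.Perm (Fin k), ∀ l, hasIncSubseq k σ l → l ≤ r := by
    rintro σ l ⟨s, hs, -⟩
    have h2 : l ≤ k := by simpa using Fintype.card_le_of_injective s hs.injective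
    exact h2.trans h
  rw [f, Nat.card_congr (Equiv.subtypeUnivEquiv this), Nat.card_eq_fintype_card,
    Fintype.card_perm, Fintype.card_fin]

lemma f_succ (r : ℕ) : f (r + 1) r = (r + 1).factorial - 1 := by
  have key : ∀ σ : Equiv.Perm (Fin (r + 1)),
      (∀ l, hasIncSubseq (r + 1) σ l → l ≤ r) ↔ σ ≠ 1 := by
    intro σ
    constructor
    · intro h h1
      have : hasIncSubseq (r + 1) σ (r + 1) := by
        refine ⟨id, strictMono_id, ?_⟩
        subst h1
        simpa using strictMono_id (α := Fin (r + 1))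
      simpa using h _ this
    · rintro hne l ⟨s, hs, hσs⟩
      by_contra hl
      push_neg at hl
      have hle : l ≤ r + 1 := by
        simpa using Fintype.card_le_of_injective s hs.injective
      have hl1 : l = r + 1 := le_antisymm hle hl
      subst hl1
      have hsid := strictMono_fin_id hs
      rw [hsid] at hσs
      have hσ : StrictMono (⇑σ) := by simpa using hσs
      have : ⇑σ = id := strictMono_fin_id hσ
      exact hne (Equiv.Perm.ext fun x => congrFun this x)
  rw [f, Nat.card_congr (Equiv.subtypeEquivRight key), Nat.card_eq_fintype_card]
  rw [Fintype.card_subtype_compl (p := fun σ : Equiv.Perm (Fin (r+1)) => σ = 1)]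
  rw [Fintype.card_subtype_eq (1 : Equiv.Perm (Fin (r+1))), Fintype.card_perm, Fintype.card_fin]

lemma exp_tsum (y : ℝ) : Real.exp y = ∑' k : ℕ, y ^ k / (k.factorial : ℝ) := by
  rw [Real.exp_eq_exp_ℝ, NormedSpace.exp_eq_tsum_div]

lemma a_le_ea (r k : ℕ) {y : ℝ} (hy : 0 ≤ y) :
    (f k r : ℝ) * y ^ k / (k.factorial : ℝ) ^ 2 ≤ y ^ k / (k.factorial : ℝ) := by
  have h1 : (f k r : ℝ) ≤ (k.factorial : ℝ) := by exact_mod_cast f_le k r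
  have h2 : (0:ℝ) < (k.factorial : ℝ) := by positivity
  calc (f k r : ℝ) * y ^ k / (k.factorial : ℝ) ^ 2
      ≤ (k.factorial : ℝ) * y ^ k / (k.factorial : ℝ) ^ 2 := by
        gcongr
    _ = y ^ k / (k.factorial : ℝ) := by
        rw [pow_two]
        exact mul_div_mul_left _ _ h2.ne'

theorem stmt11 (r : ℕ) :
    ∃ C > (0 : ℝ), ∃ y₀ > (0 : ℝ), ∀ y : ℝ, 0 < y → y < y₀ →
      |phi r y - 1 + y ^ (r + 1) / ((Nat.factorial (r + 1) : ℝ)) ^ 2| ≤ C * y ^ (r + 2) := by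
  refine ⟨3, by norm_num, 1, by norm_num, fun y hy _ => ?_⟩
  have hy0 : (0:ℝ) ≤ y := hy.le
  set a : ℕ → ℝ := fun k => (f k r : ℝ) * y ^ k / (k.factorial : ℝ) ^ 2 with ha_def
  set ea : ℕ → ℝ := fun k => y ^ k / (k.factorial : ℝ) with hea_def
  have hesum : Summable ea := Real.summable_pow_div_factorial y
  have ha_nonneg : ∀ k, 0 ≤ a k := fun k => by positivity
  have hale : ∀ k, a k ≤ ea k := fun k => a_le_ea r k hy0
  have hasum : Summable a :=
    Summable.of_nonneg_of_le ha_nonneg hale hesum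
  -- D in terms of y
  have hD : D r (Real.sqrt y) = ∑' k, a k := by
    unfold D
    congr 1
    funext k
    rw [pow_mul, Real.sq_sqrt hy0]
  -- split sums at r+2
  have hsplit_a := Summable.sum_add_tsum_nat_add (f := a) (r + 2) hasum
  have hsplit_ea := Summable.sum_add_tsum_nat_add (f := ea) (r + 2) hesum
  set T : ℝ := ∑' k, a (k + (r + 2)) with hT_def
  set E : ℝ := ∑' k, ea (k + (r + 2)) with hE_def
  have hasum' : Summable (fun k => a (k + (r + 2))) := (summable_nat_add_iff (r+2)).2 hasum
  have hesum' : Summable (fun k => ea (k + (r + 2))) := (summable_nat_add_iff (r+2)).2 hesum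
  -- finset sum of a
  set A : ℝ := ((r+1).factorial : ℝ) ^ 2 with hA_def
  have hA1 : (1:ℝ) ≤ A := by
    have : (1:ℝ) ≤ ((r+1).factorial : ℝ) := by exact_mod_cast (r+1).factorial_pos
    nlinarith
  have hsum_a : ∑ i ∈ Finset.range (r + 2), a i
      = ∑ i ∈ Finset.range (r + 2), ea i - y ^ (r+1) / A := by
    rw [Finset.sum_range_succ, Finset.sum_range_succ (f := ea)]
    have h1 : ∑ i ∈ Finset.range (r + 1), a i = ∑ i ∈ Finset.range (r + 1), ea i := by
      refine Finset.sum_congr rfl fun i hi => ?_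
      have hi' : i ≤ r := Nat.lt_succ_iff.1 (Finset.mem_range.1 hi)
      have hf : (f i r : ℝ) = (i.factorial : ℝ) := by exact_mod_cast f_of_le hi'
      simp only [ha_def, hea_def, hf]
      rw [pow_two]
      exact mul_div_mul_left _ _ (by positivity)
    have h2 : a (r+1) = ea (r+1) - y ^ (r+1) / A := by
      have hF : (0:ℝ) < ((r+1).factorial : ℝ) := by positivity
      have hf : (f (r+1) r : ℝ) = ((r+1).factorial : ℝ) - 1 := by
        rw [f_succ]
        push_cast [Nat.cast_sub (Nat.one_le_iff_ne_zero.2 (r+1).factorial_pos.ne')]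
        ring
      simp only [ha_def, hea_def, hf, hA_def]
      field_simp
    rw [h1, h2]
    ring
  -- express phi
  have hexp : Real.exp y = ∑ i ∈ Finset.range (r + 2), ea i + E := by
    rw [exp_tsum, ← hsplit_ea]
  have hphi : phi r y
      = Real.exp (-y) * (∑ i ∈ Finset.range (r + 2), ea i - y ^ (r+1) / A + T) := by
    rw [phi, hD, ← hsplit_a, hsum_a]
  have hone : (1:ℝ) = Real.exp (-y) * (∑ i ∈ Finset.range (r + 2), ea i + E) := by
    rw [← hexp, ← Real.exp_add]
    simp
  have hkey : phi r y - 1 + y ^ (r+1) / A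
      = Real.exp (-y) * (T - E) + (1 - Real.exp (-y)) * (y ^ (r+1) / A) := by
    rw [hphi]
    nth_rewrite 1 [hone]
    ring
  -- bounds
  have hT0 : 0 ≤ T := tsum_nonneg fun k => ha_nonneg _
  have hTE : T ≤ E := Summable.tsum_le_tsum (fun k => hale _) hasum' hesum'
  have hE0 : 0 ≤ E := hT0.trans hTE
  have hEbound : E ≤ y ^ (r+2) * Real.exp y := by
    have hterm : ∀ k : ℕ, ea (k + (r+2)) ≤ y ^ (r+2) * ea k := by
      intro k
      simp only [hea_def]
      rw [pow_add, mul_comm (y ^ k), mul_div_assoc]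
      gcongr
      all_goals first
        | exact pow_nonneg hy0 _
        | omega
        | exact_mod_cast Nat.factorial_le (Nat.le_add_right k (r+2))
    calc E ≤ ∑' k, y ^ (r+2) * ea k :=
          Summable.tsum_le_tsum hterm hesum' (hesum.mul_left _)
      _ = y ^ (r+2) * Real.exp y := by rw [tsum_mul_left, ← exp_tsum]
  have hexpneg : Real.exp (-y) ≤ 1 := Real.exp_le_one_iff.2 (by linarith)
  have hexpneg0 : 0 < Real.exp (-y) := Real.exp_pos _
  have h1e : 1 - Real.exp (-y) ≤ y := by
    have := Real.add_one_le_exp (-y)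
    linarith
  have hAle : y ^ (r+1) / A ≤ y ^ (r+1) := by
    rw [div_le_iff₀ (by linarith)]
    nlinarith [pow_nonneg hy0 (r+1)]
  have hfinal : |phi r y - 1 + y ^ (r+1) / A| ≤ 2 * y ^ (r+2) := by
    rw [hkey]
    have hb1 : |Real.exp (-y) * (T - E)| ≤ y ^ (r+2) := by
      rw [abs_mul, abs_of_pos hexpneg0, abs_of_nonpos (by linarith)]
      calc Real.exp (-y) * -(T - E) ≤ Real.exp (-y) * E := by
            have : -(T - E) ≤ E := by linarith
            exact mul_le_mul_of_nonneg_left this hexpneg0.le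
        _ ≤ Real.exp (-y) * (y ^ (r+2) * Real.exp y) :=
            mul_le_mul_of_nonneg_left hEbound hexpneg0.le
        _ = y ^ (r+2) := by rw [← mul_assoc, mul_comm (Real.exp (-y)), mul_assoc,
            ← Real.exp_add]; simp
    have hb2 : |(1 - Real.exp (-y)) * (y ^ (r+1) / A)| ≤ y ^ (r+2) := by
      rw [abs_mul, abs_of_nonneg (by linarith), abs_of_nonneg (by positivity)]
      calc (1 - Real.exp (-y)) * (y ^ (r+1) / A) ≤ y * y ^ (r+1) := by
            apply mul_le_mul h1e hAle (by positivity) hy0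
        _ = y ^ (r+2) := by ring
    calc |Real.exp (-y) * (T - E) + (1 - Real.exp (-y)) * (y ^ (r+1) / A)|
        ≤ |Real.exp (-y) * (T - E)| + |(1 - Real.exp (-y)) * (y ^ (r+1) / A)| := abs_add_le _ _
      _ ≤ 2 * y ^ (r+2) := by linarith
  calc |phi r y - 1 + y ^ (r+1) / ((r+1).factorial : ℝ) ^ 2| ≤ 2 * y ^ (r+2) := hfinal
    _ ≤ 3 * y ^ (r+2) := by nlinarith [pow_nonneg hy0 (r+2)]
end
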